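/- Let A be an Artin algebra and B a subalgebra of A with the same identity, and suppose I is a two-sided ideal of B that is also a left ideal of A. Then for every torsionless finitely generated B-module X, the B-module IX carries a left A-module structure extending its B-module structure under which it is a torsionless A-module, and there exist a projective A-module Q and an A-module Z such that IX ≅ Ω_A(Z) ⊕ Q as A-modules. -/

import Mathlib

universe u

open TensorProduct

section Basic

variable (Λ : Type u) [Ring Λ]

/-- `ProjDimLE Λ n M` : the module `M` admits a projective resolution of length `≤ n`
by finitely generated projective `Λ`-modules. -/
def ProjDimLE : ℕ → ModuleCat.{u} Λ → Prop
  | 0, M => Module.Projective Λ M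
  | n + 1, M => ∃ (P : ModuleCat.{u} Λ) (g : P →ₗ[Λ] M),
      Module.Projective Λ P ∧ Module.Finite Λ P ∧ Function.Surjective g ∧
      ProjDimLE n (ModuleCat.of Λ (LinearMap.ker g))

/-- The finitistic dimension of `Λ` (computed on finitely generated modules) is finite. -/
def FinFinDim : Prop :=
  ∃ n : ℕ, ∀ M : ModuleCat.{u} Λ, Module.Finite Λ M →
    (∃ k : ℕ, ProjDimLE Λ k M) → ProjDimLE Λ n M

/-- A module is indecomposable. -/
def ModIndec (M : ModuleCat.{u} Λ) : Prop :=
  Nontrivial M ∧ ∀ N₁ N₂ : Submodule Λ M, IsCompl N₁ N₂ → N₁ = ⊥ ∨ N₂ = ⊥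

/-- A class of modules has only finitely many isomorphism classes of indecomposables. -/
def ClassRepFinite (C : ModuleCat.{u} Λ → Prop) : Prop :=
  ∃ (k : ℕ) (N : Fin k → ModuleCat.{u} Λ),
    ∀ M : ModuleCat.{u} Λ, C M → ModIndec Λ M → ∃ i, Nonempty (M ≃ₗ[Λ] N i)

/-- `Λ` is representation-finite. -/
def RepFinite : Prop :=
  ClassRepFinite Λ (fun M => Module.Finite Λ M)

/-- `X` belongs to `add N`: it is a direct summand of a finite direct sum of copies of `N`. -/
def InAdd (N X : ModuleCat.{u} Λ) : Prop :=
  ∃ (k : ℕ) (i : X →ₗ[Λ] (Fin k → N)) (p : (Fin k → N) →ₗ[Λ] X),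
    p.comp i = LinearMap.id

/-- A submodule is superfluous (small). -/
def IsSuperfluous {M : ModuleCat.{u} Λ} (N : Submodule Λ M) : Prop :=
  ∀ L : Submodule Λ M, L ⊔ N = ⊤ → L = ⊤

/-- `K` is (isomorphic to) the kernel of a projective cover of `M`, i.e. a first syzygy. -/
def IsSyzygyOf (K M : ModuleCat.{u} Λ) : Prop :=
  ∃ (P : ModuleCat.{u} Λ) (g : P →ₗ[Λ] M), Module.Projective Λ P ∧ Module.Finite Λ P ∧
    Function.Surjective g ∧ IsSuperfluous Λ (LinearMap.ker g) ∧
    Nonempty (K ≃ₗ[Λ] LinearMap.ker g)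

/-- `K` is an `n`-th syzygy of `M`. -/
def IsNthSyzygy : ℕ → ModuleCat.{u} Λ → ModuleCat.{u} Λ → Prop
  | 0, K, M => Nonempty (K ≃ₗ[Λ] M)
  | n + 1, K, M => ∃ K' : ModuleCat.{u} Λ, IsNthSyzygy n K' M ∧ IsSyzygyOf Λ K K'

/-- A class `C` of modules is `m`-syzygy-finite. -/
def MSyzygyFiniteClass (m : ℕ) (C : ModuleCat.{u} Λ → Prop) : Prop :=
  ∃ N : ModuleCat.{u} Λ, Module.Finite Λ N ∧
    ∀ X, C X → ∀ K, IsNthSyzygy Λ m K X → InAdd Λ N K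

/-- A class `C` of modules is syzygy-finite. -/
def SyzygyFiniteClass (C : ModuleCat.{u} Λ → Prop) : Prop :=
  ∃ m : ℕ, MSyzygyFiniteClass Λ m C

/-- `Λ` is 1-syzygy-finite. -/
def OneSyzygyFinite : Prop :=
  MSyzygyFiniteClass Λ 1 (fun X => Module.Finite Λ X)

/-- `Λ` is syzygy-finite. -/
def AlgSyzygyFinite : Prop :=
  SyzygyFiniteClass Λ (fun X => Module.Finite Λ X)

/-- The Jacobson radical of `Λ` (intersection of the maximal left ideals). -/
def jacobsonRad : Ideal Λ := sInf {I : Ideal Λ | I.IsMaximal}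

end Basic

/-- The Jacobson radical of a subalgebra, as a subset of the ambient algebra. -/
def radSet {R A : Type u} [CommRing R] [Ring A] [Algebra R A] (S : Subalgebra R A) : Set A :=
  Subtype.val '' ((jacobsonRad ↥S : Ideal ↥S) : Set ↥S)

section Rel

variable {R : Type u} [CommRing R] {B A : Type u} [Ring B] [Ring A]
  [Algebra R B] [Algebra R A] (φ : B →ₐ[R] A)

/-- The tensor product `A ⊗_B X` of the (A,B)-bimodule `A` with a left `A`-module `X`
(viewed as a `B`-module via `φ`), realized as a quotient of `A ⊗_R X`. -/
noncomputable def relTensor (X : ModuleCat.{u} A) : ModuleCat.{u} A :=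
  letI : Module R X := Module.compHom X (algebraMap R A)
  ModuleCat.of A ((A ⊗[R] X) ⧸ Submodule.span A
    {z : A ⊗[R] X | ∃ (a : A) (b : B) (x : X),
      z = (a * φ b) ⊗ₜ[R] x - a ⊗ₜ[R] (φ b • x)})

/-- `X` is `(A,B)`-projective: a direct summand of `A ⊗_B X`. -/
noncomputable def RelProjective (X : ModuleCat.{u} A) : Prop :=
  ∃ (i : X →ₗ[A] relTensor φ X) (p : relTensor φ X →ₗ[A] X), p.comp i = LinearMap.id

/-- The map `g` admits a `B`-linear map `h` with `g ∘ h ∘ g = g`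
(this encodes `(A,B)`-exactness of the corresponding short exact sequence). -/
def RelSplitB {P X : ModuleCat.{u} A} (g : P →ₗ[A] X) : Prop :=
  ∃ h : X →+ P, (∀ (b : B) (x : X), h (φ b • x) = φ b • h x) ∧
    ∀ p : P, g (h (g p)) = g p

/-- `RelProjDimLE φ n X` : `X` has an `(A,B)`-exact resolution of length `≤ n` by
finitely generated `(A,B)`-projective modules, i.e. relative projective dimension `≤ n`. -/
noncomputable def RelProjDimLE : ℕ → ModuleCat.{u} A → Prop
  | 0, X => RelProjective φ X
  | n + 1, X => ∃ (P : ModuleCat.{u} A) (g : P →ₗ[A] X),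
      RelProjective φ P ∧ Module.Finite A P ∧ Function.Surjective g ∧ RelSplitB φ g ∧
      RelProjDimLE n (ModuleCat.of A (LinearMap.ker g))

/-- Restriction of scalars along `φ` of an `A`-module, as an object of `ModuleCat B`. -/
def resMod (X : ModuleCat.{u} A) : ModuleCat.{u} B :=
  @ModuleCat.of B _ X _ (Module.compHom X φ.toRingHom)

/-- The right `B`-module structure on `A` induced by `φ`. -/
def rightModB : Module Bᵐᵒᵖ A :=
  Module.compHom A (RingHom.op φ.toRingHom)

end Rel

variable {R : Type u} [CommRing R] [IsArtinianRing R]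
  {A : Type u} [Ring A] [Algebra R A] [Module.Finite R A]


theorem isNoetherian_of_torsionBySet (R : Type u) [CommRing R] (J : Ideal R)
    (Q : Type u) [AddCommGroup Q] [Module R Q]
    (hT : Module.IsTorsionBySet R Q J)
    (hss : IsSemisimpleRing (R ⧸ J)) (hart : IsArtinian R Q) : IsNoetherian R Q := by
  letI instM : Module (R ⧸ J) Q := hT.module
  let e : Submodule (R ⧸ J) Q ≃o Submodule R Q :=
    { toFun := fun p =>
        { carrier := p
          add_mem' := fun h1 h2 => p.add_mem h1 h2
          zero_mem' := p.zero_mem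
          smul_mem' := fun r x hx => hT.mk_smul r x ▸ p.smul_mem (Ideal.Quotient.mk J r) hx }
      invFun := fun p =>
        { carrier := p
          add_mem' := fun h1 h2 => p.add_mem h1 h2
          zero_mem' := p.zero_mem
          smul_mem' := by
            rintro ⟨c⟩ x hx
            exact hT.mk_smul c x ▸ p.smul_mem c hx }
      left_inv := fun p => SetLike.coe_injective rfl
      right_inv := fun p => SetLike.coe_injective rfl
      map_rel_iff' := Iff.rfl }
  haveI : IsArtinian (R ⧸ J) Q := by
    rw [isArtinian_iff]
    have embA : ((· < ·) : Submodule (R ⧸ J) Q → _ → Prop) ↪r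
        ((· < ·) : Submodule R Q → _ → Prop) :=
      { toEmbedding := e.toEquiv.toEmbedding
        map_rel_iff' := fun {a b} => e.lt_iff_lt }
    exact embA.wellFounded ((isArtinian_iff _ _).mp hart)
  haveI : IsSemisimpleModule (R ⧸ J) Q := inferInstance
  have hN : IsNoetherian (R ⧸ J) Q := (IsSemisimpleModule.finite_tfae.out 1 2).mpr ‹IsArtinian (R ⧸ J) Q›
  rw [isNoetherian_iff]
  have embN : ((· > ·) : Submodule R Q → _ → Prop) ↪r
      ((· > ·) : Submodule (R ⧸ J) Q → _ → Prop) :=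
    { toEmbedding := e.symm.toEquiv.toEmbedding
      map_rel_iff' := fun {a b} => e.symm.lt_iff_lt }
  exact embN.wellFounded (isNoetherian_iff.mp hN)

theorem isNoetherianRing_of_isArtinianRing_comm (R : Type u) [CommRing R] [IsArtinianRing R] :
    IsNoetherianRing R := by
  set J : Ideal R := (⊥ : Ideal R).jacobson with hJ
  obtain ⟨n, hn⟩ := IsArtinianRing.isNilpotent_jacobson_bot (R := R)
  haveI : IsReduced (R ⧸ J) := (Ideal.isRadical_iff_quotient_reduced _).mp (Ideal.isRadical_jacobson ⊥)
  haveI : IsArtinianRing (R ⧸ J) :=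
    Function.Surjective.isArtinianRing (Ideal.Quotient.mk_surjective (I := J))
  have hss : IsSemisimpleRing (R ⧸ J) := IsArtinianRing.isSemisimpleRing_of_isReduced (R ⧸ J)
  have key : ∀ k : ℕ, IsNoetherian R ↥(J ^ (n - k)) := by
    intro k
    induction k with
    | zero =>
        rw [Nat.sub_zero, show J ^ n = ⊥ from hn]
        infer_instance
    | succ k ih =>
        rcases le_or_gt n k with hnk | hkn
        · rw [Nat.sub_eq_zero_of_le (le_trans hnk (Nat.le_succ k))]
          rwa [Nat.sub_eq_zero_of_le hnk] at ih
        · set m := n - (k + 1) with hm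
          have hmk : n - k = m + 1 := by omega
          rw [hmk] at ih
          have hle : J ^ (m + 1) ≤ J ^ m := Ideal.pow_le_pow_right (Nat.le_succ m)
          set Sm : Submodule R ↥(J ^ m) := Submodule.comap (J ^ m).subtype (J ^ (m + 1) : Ideal R) with hSm
          refine (isNoetherian_iff_submodule_quotient Sm).mpr ⟨?_, ?_⟩
          · exact isNoetherian_of_linearEquiv (Submodule.comapSubtypeEquivOfLe hle).symm
          · refine isNoetherian_of_torsionBySet R J _ ?_ hss inferInstance
            rw [Module.isTorsionBySet_quotient_iff]
            intro x r hr
            have : (x : R) * r ∈ J ^ (m + 1) := by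
              rw [pow_succ]
              exact Ideal.mul_mem_mul x.2 hr
            simpa [Sm, Submodule.mem_comap, smul_eq_mul, mul_comm] using this
  have := key n
  rw [Nat.sub_self, pow_zero, Ideal.one_eq_top] at this
  exact isNoetherian_of_linearEquiv (Submodule.topEquiv (R := R) (M := R))


open Function in
/-- Over a two-sided Artinian Noetherian ring, every f.g. module admits a projective cover
drawn from direct summands of a given free cover. -/
theorem exists_cover (A : Type u) [Ring A] [IsNoetherianRing A] [IsArtinianRing A]
    {n : ℕ} (Z : Type u) [AddCommGroup Z] [Module A Z]
    (π : (Fin n → A) →ₗ[A] Z) (hπ : Surjective π) :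
    ∃ (P₀ : Submodule A (Fin n → A)) (g₀ : ↥P₀ →ₗ[A] Z),
      Module.Projective A ↥P₀ ∧ Surjective g₀ ∧
      (∀ L : Submodule A ↥P₀, L ⊔ LinearMap.ker g₀ = ⊤ → L = ⊤) := by
  classical
  set F := Fin n → A
  set 𝒮 : Set (Submodule A F) :=
    {P | Module.Projective A ↥P ∧ ∃ g : ↥P →ₗ[A] Z, Surjective g} with h𝒮
  have htop : (⊤ : Submodule A F) ∈ 𝒮 := by
    refine ⟨Module.Projective.of_equiv (Submodule.topEquiv (R := A) (M := F)).symm,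
      π.comp (⊤ : Submodule A F).subtype, fun z => ?_⟩
    obtain ⟨x, hx⟩ := hπ z
    exact ⟨⟨x, trivial⟩, hx⟩
  obtain ⟨P₀, hP₀, hmin⟩ := IsArtinian.set_has_minimal 𝒮 ⟨⊤, htop⟩
  obtain ⟨hproj, g₀, hg₀⟩ := hP₀
  refine ⟨P₀, g₀, hproj, hg₀, ?_⟩
  intro L hL
  by_contra hLne
  -- restriction of g₀ to L is surjective
  have hgL : Surjective (g₀.comp L.subtype) := by
    intro z
    obtain ⟨p, hp⟩ := hg₀ z
    have hpmem : p ∈ L ⊔ LinearMap.ker g₀ := by rw [hL]; trivial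
    obtain ⟨l, hl, k, hk, hlk⟩ := Submodule.mem_sup.mp hpmem
    refine ⟨⟨l, hl⟩, ?_⟩
    have : g₀ l + g₀ k = z := by rw [← map_add, hlk, hp]
    simpa [LinearMap.mem_ker.mp hk] using this
  obtain ⟨h, hh⟩ := Module.projective_lifting_property (g₀.comp L.subtype) g₀ hgL
  set φ : ↥P₀ →ₗ[A] ↥P₀ := L.subtype.comp h with hφ
  have hgφ : ∀ p, g₀ (φ p) = g₀ p := by
    intro p
    have := congrArg (fun f => f p) hh
    simpa [φ] using this
  have hgφpow : ∀ (m : ℕ) (p), g₀ ((φ ^ m) p) = g₀ p := by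
    intro m
    induction m with
    | zero => intro p; simp
    | succ k ih =>
        intro p
        rw [pow_succ]
        simp only [Module.End.mul_apply]
        rw [ih (φ p), hgφ]
  obtain ⟨m, hm1, hcompl⟩ : ∃ m, 1 ≤ m ∧
      IsCompl (LinearMap.ker (φ ^ m)) (LinearMap.range (φ ^ m)) :=
    ((Filter.eventually_ge_atTop 1).and φ.eventually_isCompl_ker_pow_range_pow).exists
  -- range φ^m ≤ L
  have hrle : LinearMap.range (φ ^ m) ≤ L := by
    rintro _ ⟨x, rfl⟩
    obtain ⟨m', rfl⟩ := Nat.exists_eq_add_of_le hm1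
    rw [add_comm, pow_succ']
    exact (h ((φ ^ m') x)).2
  have hrlt : LinearMap.range (φ ^ m) < ⊤ :=
    lt_of_le_of_lt hrle (lt_top_iff_ne_top.mpr hLne)
  set P' : Submodule A F := (LinearMap.range (φ ^ m)).map P₀.subtype with hP'
  have hP'lt : P' < P₀ := by
    have := Submodule.map_strictMono_of_injective P₀.injective_subtype hrlt
    rwa [Submodule.map_subtype_top] at this
  have e' : ↥(LinearMap.range (φ ^ m)) ≃ₗ[A] ↥P' :=
    Submodule.equivMapOfInjective P₀.subtype P₀.injective_subtype _
  have hrangeproj : Module.Projective A ↥(LinearMap.range (φ ^ m)) := by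
    refine Module.Projective.of_split (LinearMap.range (φ ^ m)).subtype
      ((LinearMap.range (φ ^ m)).projectionOnto _ hcompl.symm) ?_
    ext x
    simp
  have hP'mem : P' ∈ 𝒮 := by
    refine ⟨Module.Projective.of_equiv e', (g₀.comp (LinearMap.range (φ ^ m)).subtype).comp
      (e'.symm : ↥P' →ₗ[A] ↥(LinearMap.range (φ ^ m))), ?_⟩
    intro z
    obtain ⟨p, hp⟩ := hg₀ z
    refine ⟨e' ⟨(φ ^ m) p, LinearMap.mem_range_self _ p⟩, ?_⟩
    simp [LinearEquiv.symm_apply_apply, hgφpow, hp]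
  exact hmin P' hP'mem hP'lt

theorem syzygy_decomp (A : Type u) [Ring A] [IsNoetherianRing A] [IsArtinianRing A]
    {n : ℕ} (K : Submodule A (Fin n → A)) :
    ∃ (Z P W : ModuleCat.{u} A), Module.Finite A Z ∧ Module.Projective A P ∧
      Module.Finite A P ∧ IsNthSyzygy A 1 W Z ∧ Nonempty (↥K ≃ₗ[A] W × P) := by
  classical
  set F := Fin n → A
  set Zq := F ⧸ K with hZq
  set π : F →ₗ[A] Zq := K.mkQ with hπdef
  have hπ : Function.Surjective π := Submodule.mkQ_surjective K
  obtain ⟨P₀, g₀, hproj, hg₀, hsup⟩ := exists_cover A Zq π hπ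
  haveI : Module.Projective A ↥P₀ := hproj
  obtain ⟨h1, hh1⟩ := Module.projective_lifting_property g₀ π hg₀
  have hπ_eq : ∀ x : F, g₀ (h1 x) = π x := fun x => congrArg (fun f => f x) hh1
  have hr : LinearMap.range h1 ⊔ LinearMap.ker g₀ = ⊤ := by
    rw [Submodule.eq_top_iff']
    intro p
    obtain ⟨x, hx⟩ := hπ (g₀ p)
    have hker : p - h1 x ∈ LinearMap.ker g₀ := by
      rw [LinearMap.mem_ker, map_sub, hπ_eq, hx, sub_self]
    exact Submodule.mem_sup.mpr ⟨h1 x, LinearMap.mem_range_self _ _, p - h1 x, hker,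
      by abel⟩
  have h1surj : Function.Surjective h1 := LinearMap.range_eq_top.mp (hsup _ hr)
  obtain ⟨s, hs⟩ := Module.projective_lifting_property h1 LinearMap.id h1surj
  have hs' : ∀ u, h1 (s u) = u := fun u => congrArg (fun f => f u) hs
  have hKmem : ∀ x : F, x ∈ K ↔ π x = 0 := by
    intro x
    rw [← LinearMap.mem_ker, hπdef, Submodule.ker_mkQ]
  -- the two components
  have pf1 : ∀ x : ↥K, (h1.comp K.subtype) x ∈ LinearMap.ker g₀ := by
    intro x
    rw [LinearMap.mem_ker]
    simpa [hπ_eq] using (hKmem x.1).mp x.2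
  have pf2 : ∀ x : ↥K, ((LinearMap.id - s.comp h1).comp K.subtype) x ∈ LinearMap.ker h1 := by
    intro x
    rw [LinearMap.mem_ker]
    simp [hs']
  set toMap : ↥K →ₗ[A] ↥(LinearMap.ker g₀) × ↥(LinearMap.ker h1) :=
    LinearMap.prod
      (LinearMap.codRestrict (LinearMap.ker g₀) (h1.comp K.subtype) pf1)
      (LinearMap.codRestrict (LinearMap.ker h1) ((LinearMap.id - s.comp h1).comp K.subtype) pf2)
    with htoMap
  have hinj : Function.Injective toMap := by
    intro x y hxy
    have h1eq : h1 x.1 = h1 y.1 := congrArg Subtype.val (congrArg Prod.fst hxy)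
    have h2eq : x.1 - s (h1 x.1) = y.1 - s (h1 y.1) :=
      congrArg Subtype.val (congrArg Prod.snd hxy)
    apply Subtype.ext
    have := h2eq
    rw [h1eq] at this
    linear_combination (norm := abel) this
  have hsurj : Function.Surjective toMap := by
    rintro ⟨u, v⟩
    have hxK : s u.1 + v.1 ∈ K := by
      rw [hKmem, ← hπ_eq, map_add, hs', map_add]
      have hv : h1 v.1 = 0 := v.2
      have hu : g₀ u.1 = 0 := u.2
      rw [hv, map_zero, add_zero, hu]
    refine ⟨⟨s u.1 + v.1, hxK⟩, ?_⟩
    have hv : h1 v.1 = 0 := v.2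
    apply Prod.ext
    · apply Subtype.ext
      show h1 (s u.1 + v.1) = u.1
      rw [map_add, hs', hv, add_zero]
    · apply Subtype.ext
      show (s u.1 + v.1) - s (h1 (s u.1 + v.1)) = v.1
      rw [map_add, hs', hv, add_zero, add_sub_cancel_left]
  have eqv : ↥K ≃ₗ[A] ↥(LinearMap.ker g₀) × ↥(LinearMap.ker h1) :=
    LinearEquiv.ofBijective toMap ⟨hinj, hsurj⟩
  haveI hfinP₀ : Module.Finite A ↥P₀ := Module.Finite.iff_fg.mpr (IsNoetherian.noetherian P₀)
  haveI hfinW : Module.Finite A ↥(LinearMap.ker g₀) :=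
    Module.Finite.iff_fg.mpr (IsNoetherian.noetherian _)
  haveI hfinP : Module.Finite A ↥(LinearMap.ker h1) :=
    Module.Finite.iff_fg.mpr (IsNoetherian.noetherian _)
  have hprojP : Module.Projective A ↥(LinearMap.ker h1) := by
    refine Module.Projective.of_split (LinearMap.ker h1).subtype
      (LinearMap.codRestrict (LinearMap.ker h1) (LinearMap.id - s.comp h1)
        (fun x => by rw [LinearMap.mem_ker]; simp [hs'])) ?_
    ext x
    have hx : h1 x.1 = 0 := x.2
    simp [hx]
  refine ⟨ModuleCat.of A Zq, ModuleCat.of A ↥(LinearMap.ker h1),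
    ModuleCat.of A ↥(LinearMap.ker g₀), ?_, hprojP, hfinP, ?_, ⟨eqv⟩⟩
  · exact Module.Finite.of_surjective π hπ
  · refine ⟨ModuleCat.of A Zq, ⟨LinearEquiv.refl A Zq⟩,
      ModuleCat.of A ↥P₀, g₀, hproj, hfinP₀, hg₀, ?_, ⟨LinearEquiv.refl A _⟩⟩
    intro L hL
    exact hsup L hL

set_option maxHeartbeats 1000000 in
set_option synthInstance.maxHeartbeats 1000000 in
/-- If `B ⊆ A` is a subalgebra and `I` is an ideal of `B` which is a left
ideal of `A`, then for every torsionless f.g. `B`-module `X`, the module `I X` carries an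
`A`-module structure extending its `B`-module structure, is torsionless over `A`, and is of
the form `Ω_A(Z) ⊕ Q` with `Q` projective. -/
theorem statement18 (S : Subalgebra R A) (I : Ideal ↥S)
    (hright : ∀ x ∈ I, ∀ b : ↥S, x * b ∈ I)
    (hleftA : ∀ a : A, ∀ x ∈ I, ∃ h : a * (x : A) ∈ S, (⟨a * (x : A), h⟩ : ↥S) ∈ I) :
    ∀ X : ModuleCat.{u} ↥S, Module.Finite ↥S X →
      (∃ Q₀ : ModuleCat.{u} ↥S, Module.Projective ↥S Q₀ ∧ Module.Finite ↥S Q₀ ∧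
        ∃ f : X →ₗ[↥S] Q₀, Function.Injective f) →
      ∀ IX : Submodule ↥S X,
        IX = Submodule.span ↥S {v : X | ∃ i : ↥S, i ∈ I ∧ ∃ x₀ : X, v = i • x₀} →
        ∃ (K' : ModuleCat.{u} A) (e : ↥IX ≃+ K'),
          (∀ (b : ↥S) (v : ↥IX), e (b • v) = (b : A) • e v) ∧
          (∃ Q : ModuleCat.{u} A, Module.Projective A Q ∧ Module.Finite A Q ∧
            ∃ f : K' →ₗ[A] Q, Function.Injective f) ∧
          ∃ (Z P W : ModuleCat.{u} A), Module.Finite A Z ∧ Module.Projective A P ∧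
            Module.Finite A P ∧ IsNthSyzygy A 1 W Z ∧ Nonempty (K' ≃ₗ[A] W × P) := by
  intro X hXfin hTL IX hIX
  obtain ⟨Q₀, hQproj, hQfin, f, hf⟩ := hTL
  haveI := hQproj; haveI := hQfin
  -- ring-theoretic instances on A
  haveI : IsNoetherianRing R := isNoetherianRing_of_isArtinianRing_comm R
  haveI : IsNoetherianRing A := isNoetherian_of_tower R (inferInstance : IsNoetherian R A)
  haveI : IsArtinianRing A := isArtinian_of_tower R (inferInstance : IsArtinian R A)
  -- embed X into a finite free S-module
  obtain ⟨n, ρ, hρ⟩ := Module.Finite.exists_fin' ↥S Q₀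
  obtain ⟨σ, hσ⟩ := Module.projective_lifting_property ρ LinearMap.id hρ
  have hσ' : ∀ q, ρ (σ q) = q := fun q => congrArg (fun F => F q) hσ
  have hσinj : Function.Injective σ := fun a b h => by
    have := congrArg ρ h; rwa [hσ', hσ'] at this
  set g : X →ₗ[↥S] (Fin n → ↥S) := σ.comp f with hgdef
  have hg : Function.Injective g := fun a b h => hf (hσinj h)
  -- the additive embedding of X into the free A-module
  set g' : X → (Fin n → A) := fun x j => ((g x) j : A) with hg'def
  have g'_add : ∀ x y, g' (x + y) = g' x + g' y := by
    intro x y; funext j; simp [g', map_add]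
  have g'_zero : g' 0 = 0 := by funext j; simp [g']
  have g'_smul : ∀ (b : ↥S) (x : X), g' (b • x) = (b : A) • g' x := by
    intro b x; funext j
    simp [g', map_smul, Pi.smul_apply, smul_eq_mul]
  have g'_inj : Function.Injective g' := by
    intro x y h
    apply hg; funext j
    exact Subtype.ext (congrFun h j)
  have hkey : ∀ v, v ∈ IX → ∀ a : A, ∃ w, w ∈ IX ∧ a • g' v = g' w := by
    intro v hv
    rw [hIX] at hv
    induction hv using Submodule.span_induction with
    | mem x hx =>
        intro a
        obtain ⟨i, hiI, x₀, rfl⟩ := hx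
        obtain ⟨hmem, hI'⟩ := hleftA a i hiI
        refine ⟨(⟨a * (i : A), hmem⟩ : ↥S) • x₀, ?_, ?_⟩
        · rw [hIX]
          exact Submodule.subset_span ⟨⟨a * (i : A), hmem⟩, hI', x₀, rfl⟩
        · funext j
          show a * ((g (i • x₀)) j : A) = ((g ((⟨a * (i : A), hmem⟩ : ↥S) • x₀)) j : A)
          rw [map_smul, map_smul, Pi.smul_apply, Pi.smul_apply, smul_eq_mul, smul_eq_mul]
          push_cast
          rw [mul_assoc]
    | zero =>
        intro a
        exact ⟨0, Submodule.zero_mem _, by rw [g'_zero, smul_zero]⟩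
    | add x y hx hy ihx ihy =>
        intro a
        obtain ⟨wx, hwx, ex⟩ := ihx a
        obtain ⟨wy, hwy, ey⟩ := ihy a
        exact ⟨wx + wy, Submodule.add_mem _ hwx hwy,
          by rw [g'_add, smul_add, ex, ey, g'_add]⟩
    | smul c x hx ih =>
        intro a
        obtain ⟨w, hw, ew⟩ := ih (a * (c : A))
        refine ⟨w, hw, ?_⟩
        rw [g'_smul, smul_smul, ew]
  set Ksub : Submodule A (Fin n → A) :=
    { carrier := g' '' (IX : Set X)
      add_mem' := by
        rintro _ _ ⟨x, hx, rfl⟩ ⟨y, hy, rfl⟩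
        exact ⟨x + y, Submodule.add_mem _ hx hy, g'_add x y⟩
      zero_mem' := ⟨0, Submodule.zero_mem _, g'_zero⟩
      smul_mem' := by
        rintro a _ ⟨v, hv, rfl⟩
        obtain ⟨w, hw, ew⟩ := hkey v hv a
        exact ⟨w, hw, ew.symm⟩ } with hKsub
  set em : ↥IX →+ ↥Ksub :=
    { toFun := fun v => ⟨g' v.1, ⟨v.1, v.2, rfl⟩⟩
      map_zero' := Subtype.ext (by simpa using g'_zero)
      map_add' := fun x y => Subtype.ext (by simpa using g'_add x.1 y.1) } with hem
  have hembij : Function.Bijective em := by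
    constructor
    · intro x y h
      exact Subtype.ext (g'_inj (congrArg Subtype.val h))
    · rintro ⟨_, v, hv, rfl⟩
      exact ⟨⟨v, hv⟩, rfl⟩
  refine ⟨ModuleCat.of A ↥Ksub, AddEquiv.ofBijective em hembij, ?_, ?_, ?_⟩
  · intro b v
    apply Subtype.ext
    show g' ((b • v : ↥IX) : X) = ((b : A) • (⟨g' v.1, _⟩ : ↥Ksub) : ↥Ksub).1
    rw [Submodule.coe_smul]
    exact g'_smul b v.1
  · exact ⟨ModuleCat.of A (Fin n → A), (inferInstance : Module.Projective A (Fin n → A)),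
      (inferInstance : Module.Finite A (Fin n → A)), Ksub.subtype,
      Submodule.injective_subtype _⟩
  · exact syzygy_decomp A Ksub
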